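/- arXiv:1809.01643 — 5 statements merged into one kernel-verified Lean document; each statement's English description precedes it below -/
import Mathlib

section
/- Under the difference-in-differences identification assumptions (observational rule, common support, no anticipation, conditional common trends), for every x in the support of X the conditional average treatment effect on the treated satisfies E[Y^1(1) - Y^0(1) | D=1, T=1, X=x] = m_Y(1,1,x) - m_Y(1,0,x) - m_Y(0,1,x) + m_Y(0,0,x), where m_Y(d,t,x) = E[Y | D=d, T=t, X=x]. -/
open MeasureTheory

/-- Conditional expectation of `f` given the event `A`. -/
noncomputable def cexp {Ω : Type*} [MeasurableSpace Ω] (μ : Measure Ω) (f : Ω → ℝ)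
    (A : Set Ω) : ℝ :=
  (∫ ω in A, f ω ∂μ) / (μ A).toReal

/-- The event `{D = d, T = t, X = x}`. -/
def Ev {Ω 𝒳 : Type*} (D T : Ω → Bool) (X : Ω → 𝒳) (d t : Bool) (x : 𝒳) : Set Ω :=
  {ω | D ω = d ∧ T ω = t ∧ X ω = x}

lemma my_setIntegral_zero {Ω : Type*} [MeasurableSpace Ω] (μ : Measure Ω)
    {f : Ω → ℝ} (hf : Integrable f μ) {A : Set Ω} (h0 : ∀ ω ∈ A, f ω = 0) :
    ∫ ω in A, f ω ∂μ = 0 := by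
  obtain ⟨g, hg, hfg⟩ := hf.aestronglyMeasurable
  have hres : f =ᵐ[μ.restrict A] g := hfg.filter_mono (ae_mono Measure.restrict_le_self)
  have hmeas : MeasurableSet {ω | g ω ≠ 0} :=
    (hg.measurable (measurableSet_singleton (0 : ℝ))).compl
  have hsub : {ω | g ω ≠ 0} ∩ A ⊆ {ω | f ω ≠ g ω} := by
    rintro ω ⟨hgω, hA⟩
    simp only [Set.mem_setOf_eq] at *
    rw [h0 ω hA]; exact fun h => hgω h.symm
  have hnull : μ ({ω | g ω ≠ 0} ∩ A) = 0 :=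
    le_antisymm (le_trans (measure_mono hsub) (le_of_eq hfg)) zero_le
  have hg0 : g =ᵐ[μ.restrict A] 0 := by
    rw [Filter.EventuallyEq, ae_iff]
    simpa [Measure.restrict_apply hmeas] using hnull
  calc ∫ ω in A, f ω ∂μ = ∫ ω in A, g ω ∂μ := integral_congr_ae hres
    _ = ∫ ω in A, (0:ℝ) ∂μ := integral_congr_ae hg0
    _ = 0 := integral_zero _ _

lemma cexp_sub {Ω : Type*} [MeasurableSpace Ω] (μ : Measure Ω)
    {f g : Ω → ℝ} (hf : Integrable f μ) (hg : Integrable g μ) (A : Set Ω) :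
    cexp μ (fun ω => f ω - g ω) A = cexp μ f A - cexp μ g A := by
  unfold cexp
  rw [integral_sub hf.restrict hg.restrict, sub_div]

/-- Under the DiD identification assumptions (observational rule, common
support, no anticipation, conditional common trends), for every `x` in the support of `X`,
`E[Y¹(1) - Y⁰(1) | D=1, T=1, X=x] = m_Y(1,1,x) - m_Y(1,0,x) - m_Y(0,1,x) + m_Y(0,0,x)`. -/
theorem did_conditional_atet_identification
    {Ω 𝒳 : Type*} [MeasurableSpace Ω]
    (μ : Measure Ω) [IsProbabilityMeasure μ]
    (Y : Ω → ℝ) (D T : Ω → Bool) (X : Ω → 𝒳)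
    (PO : Bool → Bool → Ω → ℝ)  -- potential outcomes: `PO d t = Y^d(t)`
    (hYint : Integrable Y μ) (hPOint : ∀ d t, Integrable (PO d t) μ)
    -- (i) observational rule
    (hObs : ∀ ω, Y ω = PO (D ω) (T ω) ω)
    -- (ii) common support
    (hCS : ∀ d t x, 0 < μ {ω | X ω = x} → 0 < μ (Ev D T X d t x))
    -- (iii) no anticipation
    (hNA : ∀ x, 0 < μ {ω | X ω = x} →
      cexp μ (fun ω => PO true false ω - PO false false ω) (Ev D T X true false x) = 0)
    -- (iv) conditional common trends
    (hCT : ∀ x, 0 < μ {ω | X ω = x} →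
      cexp μ (PO false true) (Ev D T X false true x)
        - cexp μ (PO false false) (Ev D T X false false x)
      = cexp μ (PO false true) (Ev D T X true true x)
        - cexp μ (PO false false) (Ev D T X true false x)) :
    ∀ x, 0 < μ {ω | X ω = x} →
      cexp μ (fun ω => PO true true ω - PO false true ω) (Ev D T X true true x)
        = cexp μ Y (Ev D T X true true x) - cexp μ Y (Ev D T X true false x)
          - cexp μ Y (Ev D T X false true x) + cexp μ Y (Ev D T X false false x) := by
  intro x hx
  have key : ∀ d t, cexp μ Y (Ev D T X d t x) = cexp μ (PO d t) (Ev D T X d t x) := by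
    intro d t
    unfold cexp
    congr 1
    have h0 : ∀ ω ∈ Ev D T X d t x, (fun ω => Y ω - PO d t ω) ω = 0 := by
      rintro ω ⟨hD, hT, _⟩
      simp only
      rw [hObs ω, hD, hT, sub_self]
    have := my_setIntegral_zero μ (hYint.sub (hPOint d t)) h0
    simp only [Pi.sub_apply] at this
    rw [integral_sub hYint.restrict (hPOint d t).restrict] at this
    linarith
  rw [key true true, key true false, key false true, key false false]
  have hNA' := hNA x hx
  rw [cexp_sub μ (hPOint true false) (hPOint false false)] at hNA'
  have hCT' := hCT x hx
  rw [cexp_sub μ (hPOint true true) (hPOint false true)]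
  linarith
end

section
/- The efficient influence function for the cross-sectional fully robust case has mean zero: E[ (p_{D=1,T=1}(X)/p_{DT}) * sum_{d,t} (-1)^{d+t} (1{D=d,T=t}/p_{D=d,T=t}(X)) (Y - m_Y(d,t,X)) + (D T / p_{DT}) (m_Y(X) - theta) ] = 0, where theta = E[ m_Y(X) p_{D=1,T=1}(X) ] / p_{DT}. -/
open MeasureTheory

/-- `p_{D=d,T=t}(x) = Pr(D=d, T=t | X=x)`. -/
noncomputable def pDTx {Ω 𝒳 : Type*} [MeasurableSpace Ω] (μ : Measure Ω)
    (D T : Ω → Bool) (X : Ω → 𝒳) (d t : Bool) (x : 𝒳) : ℝ :=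
  (μ (Ev D T X d t x)).toReal / (μ {ω | X ω = x}).toReal

/-- `m_Y(d,t,x) = E[Y | D=d, T=t, X=x]`. -/
noncomputable def mY {Ω 𝒳 : Type*} [MeasurableSpace Ω] (μ : Measure Ω) (Y : Ω → ℝ)
    (D T : Ω → Bool) (X : Ω → 𝒳) (d t : Bool) (x : 𝒳) : ℝ :=
  cexp μ Y (Ev D T X d t x)

/-- `m_Y(x) = Σ_{d,t} (-1)^{d+t} m_Y(d,t,x)`. -/
noncomputable def mYx {Ω 𝒳 : Type*} [MeasurableSpace Ω] (μ : Measure Ω) (Y : Ω → ℝ)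
    (D T : Ω → Bool) (X : Ω → 𝒳) (x : 𝒳) : ℝ :=
  mY μ Y D T X true true x - mY μ Y D T X true false x
    - mY μ Y D T X false true x + mY μ Y D T X false false x

/-- Indicator `1{D=d, T=t}`. -/
def indDT {Ω : Type*} (D T : Ω → Bool) (d t : Bool) (ω : Ω) : ℝ :=
  if D ω = d ∧ T ω = t then 1 else 0

section Aux

variable {Ω 𝒳 : Type*} [MeasurableSpace Ω] [MeasurableSpace 𝒳] [MeasurableSingletonClass 𝒳]
variable {μ : Measure Ω} {D T : Ω → Bool} {X : Ω → 𝒳}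

/-- Any real function of `X` is measurable when `X` is measurable with finite range. -/
lemma meas_compX (hX : Measurable X) (hXfin : (Set.range X).Finite) (g : 𝒳 → ℝ) :
    Measurable fun ω => g (X ω) := by
  classical
  have h : (fun ω => g (X ω))
      = fun ω => ∑ x ∈ hXfin.toFinset, if X ω = x then g x else 0 := by
    funext ω
    rw [Finset.sum_ite_eq]
    simp [hXfin.mem_toFinset]
  rw [h]
  exact Finset.measurable_sum _ fun x _ =>
    Measurable.ite (hX (measurableSet_singleton x)) measurable_const measurable_const

lemma bdd_compX (hXfin : (Set.range X).Finite) (g : 𝒳 → ℝ) (ω : Ω) :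
    |g (X ω)| ≤ ∑ x ∈ hXfin.toFinset, |g x| :=
  Finset.single_le_sum (f := fun x => |g x|) (fun _ _ => abs_nonneg _)
    (hXfin.mem_toFinset.2 ⟨ω, rfl⟩)

/-- Measurability of a function of `(X, D, T)`. -/
lemma meas_comp3 (hD : Measurable D) (hT : Measurable T) (hX : Measurable X)
    (hXfin : (Set.range X).Finite) (u : 𝒳 → Bool → Bool → ℝ) :
    Measurable fun ω => u (X ω) (D ω) (T ω) := by
  have h : (fun ω => u (X ω) (D ω) (T ω))
      = fun ω => ∑ d : Bool, ∑ t : Bool,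
          (if D ω = d ∧ T ω = t then (1:ℝ) else 0) * u (X ω) d t := by
    funext ω
    cases hd : D ω <;> cases ht : T ω <;> simp [hd, ht]
  rw [h]
  refine Finset.measurable_sum _ fun d _ => Finset.measurable_sum _ fun t _ => ?_
  exact Measurable.mul
    (Measurable.ite ((hD (measurableSet_singleton d)).inter (hT (measurableSet_singleton t)))
      measurable_const measurable_const)
    (meas_compX hX hXfin fun x => u x d t)

lemma bdd_comp3 (hXfin : (Set.range X).Finite) (u : 𝒳 → Bool → Bool → ℝ) (ω : Ω) :
    |u (X ω) (D ω) (T ω)| ≤ ∑ x ∈ hXfin.toFinset,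
      (|u x true true| + |u x true false| + |u x false true| + |u x false false|) := by
  have h1 : |u (X ω) (D ω) (T ω)| ≤ |u (X ω) true true| + |u (X ω) true false|
      + |u (X ω) false true| + |u (X ω) false false| := by
    cases D ω <;> cases T ω <;>
      nlinarith [abs_nonneg (u (X ω) true true), abs_nonneg (u (X ω) true false),
        abs_nonneg (u (X ω) false true), abs_nonneg (u (X ω) false false)]
  have h2 := bdd_compX hXfin
    (fun x => |u x true true| + |u x true false| + |u x false true| + |u x false false|) ω
  rw [abs_of_nonneg (by positivity)] at h2
  exact h1.trans (h2.trans (Finset.sum_le_sum fun x _ => (abs_of_nonneg (by positivity)).le))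

lemma int_comp3 [IsProbabilityMeasure μ] (hD : Measurable D) (hT : Measurable T)
    (hX : Measurable X) (hXfin : (Set.range X).Finite) {Y : Ω → ℝ} (hYint : Integrable Y μ)
    (u v : 𝒳 → Bool → Bool → ℝ) :
    Integrable (fun ω => u (X ω) (D ω) (T ω) * Y ω + v (X ω) (D ω) (T ω)) μ := by
  refine Integrable.add ?_ ?_
  · exact hYint.bdd_mul (c := ∑ x ∈ hXfin.toFinset,
        (|u x true true| + |u x true false| + |u x false true| + |u x false false|))
      (meas_comp3 hD hT hX hXfin u).aestronglyMeasurable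
      (ae_of_all _ fun ω => by simpa [Real.norm_eq_abs] using bdd_comp3 hXfin u ω)
  · refine (integrable_const (∑ x ∈ hXfin.toFinset,
      (|v x true true| + |v x true false| + |v x false true| + |v x false false|))).mono'
      (meas_comp3 hD hT hX hXfin v).aestronglyMeasurable ?_
    exact ae_of_all _ fun ω => by simpa [Real.norm_eq_abs] using bdd_comp3 hXfin v ω

end Aux

/-- The efficient influence function for the cross-sectional fully robust
case (CS-1) has mean zero, where `θ = E[m_Y(X) p_{D=1,T=1}(X)] / p_{DT}`. -/
theorem eif_CS1_mean_zero
    {Ω 𝒳 : Type*} [MeasurableSpace Ω] [MeasurableSpace 𝒳] [MeasurableSingletonClass 𝒳]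
    (μ : Measure Ω) [IsProbabilityMeasure μ]
    (Y : Ω → ℝ) (D T : Ω → Bool) (X : Ω → 𝒳)
    (hD : Measurable D) (hT : Measurable T) (hX : Measurable X)
    (hXfin : (Set.range X).Finite)
    (hYint : Integrable Y μ)
    -- common support
    (hCS : ∀ d t x, 0 < μ {ω | X ω = x} → 0 < μ (Ev D T X d t x))
    -- p_{DT} = Pr(D=1, T=1) > 0
    (hDT : 0 < μ {ω | D ω = true ∧ T ω = true})
    (pDT : ℝ) (hpDT : pDT = (μ {ω | D ω = true ∧ T ω = true}).toReal)
    (θ : ℝ) (hθ : θ = (∫ ω, mYx μ Y D T X (X ω) * pDTx μ D T X true true (X ω) ∂μ) / pDT) :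
    ∫ ω,
        (pDTx μ D T X true true (X ω) / pDT)
          * (indDT D T true true ω / pDTx μ D T X true true (X ω)
              * (Y ω - mY μ Y D T X true true (X ω))
            - indDT D T true false ω / pDTx μ D T X true false (X ω)
              * (Y ω - mY μ Y D T X true false (X ω))
            - indDT D T false true ω / pDTx μ D T X false true (X ω)
              * (Y ω - mY μ Y D T X false true (X ω))
            + indDT D T false false ω / pDTx μ D T X false false (X ω)
              * (Y ω - mY μ Y D T X false false (X ω)))
        + (indDT D T true true ω / pDT) * (mYx μ Y D T X (X ω) - θ) ∂μ = 0 := by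
  classical
  -- notation
  set S : Finset 𝒳 := hXfin.toFinset with hS
  set F : 𝒳 → Set Ω := fun x => {ω | X ω = x} with hF
  have hFmeas : ∀ x, MeasurableSet (F x) := fun x => hX (measurableSet_singleton x)
  have hAmeas : ∀ d t, MeasurableSet {ω | D ω = d ∧ T ω = t} := fun d t =>
    (hD (measurableSet_singleton d)).inter (hT (measurableSet_singleton t))
  have hEvmeas : ∀ d t x, MeasurableSet (Ev D T X d t x) := by
    intro d t x
    have : Ev D T X d t x = {ω | D ω = d ∧ T ω = t} ∩ F x := by
      ext ω; simp [Ev, hF]; tauto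
    rw [this]; exact (hAmeas d t).inter (hFmeas x)
  have hEvsub : ∀ d t x, Ev D T X d t x ⊆ F x := fun d t x ω hω => hω.2.2
  have hpDTpos : 0 < pDT := by
    rw [hpDT]; exact ENNReal.toReal_pos hDT.ne' (measure_ne_top μ _)
  have hpDTne : pDT ≠ 0 := hpDTpos.ne'
  -- the integrand
  set f : Ω → ℝ := fun ω =>
      (pDTx μ D T X true true (X ω) / pDT)
        * (indDT D T true true ω / pDTx μ D T X true true (X ω)
            * (Y ω - mY μ Y D T X true true (X ω))
          - indDT D T true false ω / pDTx μ D T X true false (X ω)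
            * (Y ω - mY μ Y D T X true false (X ω))
          - indDT D T false true ω / pDTx μ D T X false true (X ω)
            * (Y ω - mY μ Y D T X false true (X ω))
          + indDT D T false false ω / pDTx μ D T X false false (X ω)
            * (Y ω - mY μ Y D T X false false (X ω)))
      + (indDT D T true true ω / pDT) * (mYx μ Y D T X (X ω) - θ) with hf
  -- integrability of f
  set sgn : Bool → Bool → ℝ := fun d t => if d = t then 1 else -1 with hsgn
  set u : 𝒳 → Bool → Bool → ℝ := fun x d t =>
    (pDTx μ D T X true true x / pDT) * (sgn d t / pDTx μ D T X d t x) with hu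
  set v : 𝒳 → Bool → Bool → ℝ := fun x d t =>
    -(pDTx μ D T X true true x / pDT) * (sgn d t * mY μ Y D T X d t x / pDTx μ D T X d t x)
      + (if d = true ∧ t = true then (mYx μ Y D T X x - θ) / pDT else 0) with hv
  have hf_eq : ∀ ω, f ω = u (X ω) (D ω) (T ω) * Y ω + v (X ω) (D ω) (T ω) := by
    intro ω
    cases hd : D ω <;> cases ht : T ω <;>
      simp only [hf, hu, hv, hsgn, indDT, hd, ht] <;> norm_num <;> ring
  have hf_int : Integrable f μ := by
    refine (int_comp3 hD hT hX hXfin hYint u v).congr ?_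
    exact ae_of_all _ fun ω => (hf_eq ω).symm
  -- key product identity
  have hpmul : ∀ d t x, pDTx μ D T X d t x * (μ (F x)).toReal = (μ (Ev D T X d t x)).toReal := by
    intro d t x
    by_cases h : (μ (F x)).toReal = 0
    · have hF0 : μ (F x) = 0 := by
        rcases (ENNReal.toReal_eq_zero_iff _).1 h with h' | h'
        · exact h'
        · exact absurd h' (measure_ne_top μ _)
      have hEv0 : μ (Ev D T X d t x) = 0 :=
        le_antisymm (le_trans (measure_mono (hEvsub d t x)) hF0.le) zero_le
      simp [pDTx, hEv0, h]
    · simp only [pDTx, hF]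
      exact div_mul_cancel₀ _ h
  -- per-fiber computation
  have hfiber : ∀ x, ∫ ω in F x, f ω ∂μ
      = (μ (Ev D T X true true x)).toReal * ((mYx μ Y D T X x - θ) / pDT) := by
    intro x
    by_cases hFx : μ (F x) = 0
    · have hEv0 : μ (Ev D T X true true x) = 0 :=
        le_antisymm (le_trans (measure_mono (hEvsub _ _ x)) hFx.le) zero_le
      rw [Measure.restrict_eq_zero.2 hFx]
      simp [hEv0]
    · have hFpos : 0 < μ (F x) := lt_of_le_of_ne zero_le (Ne.symm hFx)
      have hFtR : 0 < (μ (F x)).toReal := ENNReal.toReal_pos hFx (measure_ne_top μ _)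
      have hEvpos : ∀ d t, 0 < μ (Ev D T X d t x) := fun d t => hCS d t x hFpos
      have hEvtR : ∀ d t, 0 < (μ (Ev D T X d t x)).toReal := fun d t =>
        ENNReal.toReal_pos (hEvpos d t).ne' (measure_ne_top μ _)
      have hppos : ∀ d t, 0 < pDTx μ D T X d t x := fun d t =>
        div_pos (hEvtR d t) hFtR
      -- indicator rewriting
      have hindrw : ∀ (d t : Bool) (g : Ω → ℝ) (ω : Ω),
          indDT D T d t ω * g ω = Set.indicator {ω | D ω = d ∧ T ω = t} g ω := by
        intro d t g ω
        by_cases h : D ω = d ∧ T ω = t <;> simp [indDT, h, Set.indicator]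
      have hinter : ∀ d t, F x ∩ {ω | D ω = d ∧ T ω = t} = Ev D T X d t x := by
        intro d t; ext ω; simp [Ev, hF]; tauto
      -- each centered term integrates to zero over the fiber
      have hkey : ∀ d t, ∫ ω in F x,
          indDT D T d t ω * (Y ω - mY μ Y D T X d t x) ∂μ = 0 := by
        intro d t
        have h1 : ∫ ω in F x, indDT D T d t ω * (Y ω - mY μ Y D T X d t x) ∂μ
            = ∫ ω in Ev D T X d t x, (Y ω - mY μ Y D T X d t x) ∂μ := by
          rw [show (fun ω => indDT D T d t ω * (Y ω - mY μ Y D T X d t x))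
              = Set.indicator {ω | D ω = d ∧ T ω = t} (fun ω => Y ω - mY μ Y D T X d t x)
              from funext fun ω => hindrw d t (fun ω => Y ω - mY μ Y D T X d t x) ω]
          rw [setIntegral_indicator (hAmeas d t), hinter]
        rw [h1, integral_sub (hYint.restrict) (integrable_const _), setIntegral_const]
        have h2 : ∫ ω in Ev D T X d t x, Y ω ∂μ
            = mY μ Y D T X d t x * (μ (Ev D T X d t x)).toReal := by
          rw [mY, cexp, div_mul_cancel₀ _ (hEvtR d t).ne']
        rw [h2]
        simp [smul_eq_mul, mul_comm, measureReal_def]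
      have hind : ∫ ω in F x, indDT D T true true ω ∂μ
          = (μ (Ev D T X true true x)).toReal := by
        have h1 : (fun ω => indDT D T true true ω)
            = Set.indicator {ω | D ω = true ∧ T ω = true} (fun _ => (1:ℝ)) := by
          funext ω
          simpa using hindrw true true (fun _ => (1:ℝ)) ω
        rw [h1, setIntegral_indicator (hAmeas true true), hinter, setIntegral_const]
        simp
        rfl
      -- integrability of each piece on the fiber
      have hTint : ∀ d t, Integrable
          (fun ω => indDT D T d t ω * (Y ω - mY μ Y D T X d t x)) (μ.restrict (F x)) := by
        intro d t
        rw [show (fun ω => indDT D T d t ω * (Y ω - mY μ Y D T X d t x))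
            = Set.indicator {ω | D ω = d ∧ T ω = t} (fun ω => Y ω - mY μ Y D T X d t x)
            from funext fun ω => hindrw d t (fun ω => Y ω - mY μ Y D T X d t x) ω]
        exact ((hYint.sub (integrable_const _)).indicator (hAmeas d t)).restrict
      have hIind : Integrable (fun ω => indDT D T true true ω) (μ.restrict (F x)) := by
        have h1 : (fun ω => indDT D T true true ω)
            = Set.indicator {ω | D ω = true ∧ T ω = true} (fun _ => (1:ℝ)) := by
          funext ω
          simpa using hindrw true true (fun _ => (1:ℝ)) ω
        rw [h1]
        exact ((integrable_const _).indicator (hAmeas true true)).restrict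
      -- rewrite f on the fiber
      set ctt : ℝ := (pDTx μ D T X true true x / pDT) / pDTx μ D T X true true x
      set ctf : ℝ := (pDTx μ D T X true true x / pDT) / pDTx μ D T X true false x
      set cft : ℝ := (pDTx μ D T X true true x / pDT) / pDTx μ D T X false true x
      set cff : ℝ := (pDTx μ D T X true true x / pDT) / pDTx μ D T X false false x
      set c' : ℝ := (mYx μ Y D T X x - θ) / pDT
      have hcongr : ∫ ω in F x, f ω ∂μ
          = ∫ ω in F x,
              (ctt * (indDT D T true true ω * (Y ω - mY μ Y D T X true true x))
              - ctf * (indDT D T true false ω * (Y ω - mY μ Y D T X true false x))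
              - cft * (indDT D T false true ω * (Y ω - mY μ Y D T X false true x))
              + cff * (indDT D T false false ω * (Y ω - mY μ Y D T X false false x)))
              + c' * indDT D T true true ω ∂μ := by
        refine setIntegral_congr_fun (hFmeas x) fun ω hω => ?_
        have hXx : X ω = x := hω
        simp only [hf, hXx, ctt, ctf, cft, cff, c']
        ring
      rw [hcongr]
      rw [integral_add (by
            exact (((((hTint true true).const_mul ctt).sub
              ((hTint true false).const_mul ctf)).sub
              ((hTint false true).const_mul cft)).add
              ((hTint false false).const_mul cff))
          ) (hIind.const_mul c'),
        integral_add (by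
            exact ((((hTint true true).const_mul ctt).sub
              ((hTint true false).const_mul ctf)).sub
              ((hTint false true).const_mul cft))
          ) ((hTint false false).const_mul cff),
        integral_sub (by
            exact (((hTint true true).const_mul ctt).sub
              ((hTint true false).const_mul ctf))
          ) ((hTint false true).const_mul cft),
        integral_sub ((hTint true true).const_mul ctt) ((hTint true false).const_mul ctf)]
      rw [integral_const_mul, integral_const_mul, integral_const_mul, integral_const_mul,
        integral_const_mul]
      rw [hkey true true, hkey true false, hkey false true, hkey false false, hind]
      simp [c', mul_comm]
  -- split the integral over fibers
  have hUnion : ⋃ x ∈ S, F x = Set.univ := by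
    ext ω
    simp only [Set.mem_iUnion, Set.mem_univ, iff_true]
    exact ⟨X ω, hXfin.mem_toFinset.2 ⟨ω, rfl⟩, rfl⟩
  have hdisj : (↑S : Set 𝒳).Pairwise (Function.onFun Disjoint F) := by
    intro x _ y _ hxy
    refine Set.disjoint_left.2 fun ω hx hy => hxy ?_
    rw [← hx, ← hy]
  have hsplit : ∫ ω, f ω ∂μ = ∑ x ∈ S, ∫ ω in F x, f ω ∂μ := by
    rw [← setIntegral_univ, ← hUnion]
    exact integral_biUnion_finset S (fun x _ => hFmeas x) hdisj
      (fun x _ => hf_int.integrableOn)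
  -- sums over fibers
  have hEvdisj : (↑S : Set 𝒳).Pairwise (Function.onFun Disjoint fun x => Ev D T X true true x) := by
    intro x _ y _ hxy
    refine Set.disjoint_left.2 fun ω hx hy => hxy ?_
    rw [← hx.2.2, ← hy.2.2]
  have hEvUnion : ⋃ x ∈ S, Ev D T X true true x = {ω | D ω = true ∧ T ω = true} := by
    ext ω
    simp only [Set.mem_iUnion, Ev, Set.mem_setOf_eq]
    constructor
    · rintro ⟨x, _, h1, h2, _⟩; exact ⟨h1, h2⟩
    · rintro ⟨h1, h2⟩; exact ⟨X ω, hXfin.mem_toFinset.2 ⟨ω, rfl⟩, h1, h2, rfl⟩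
  have hsum1 : ∑ x ∈ S, (μ (Ev D T X true true x)).toReal = pDT := by
    rw [hpDT, ← hEvUnion, measure_biUnion_finset hEvdisj (fun x _ => hEvmeas true true x),
      ENNReal.toReal_sum (fun x _ => measure_ne_top μ _)]
  -- the θ identity
  have hθint : Integrable (fun ω => mYx μ Y D T X (X ω) * pDTx μ D T X true true (X ω)) μ := by
    have := int_comp3 (μ := μ) hD hT hX hXfin (Y := Y) hYint (fun _ _ _ => 0)
      (fun x _ _ => mYx μ Y D T X x * pDTx μ D T X true true x)
    simpa using this
  have hsum2 : ∑ x ∈ S, mYx μ Y D T X x * (μ (Ev D T X true true x)).toReal = θ * pDT := by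
    have hθ' : θ * pDT = ∫ ω, mYx μ Y D T X (X ω) * pDTx μ D T X true true (X ω) ∂μ := by
      rw [hθ]; field_simp
    rw [hθ']
    rw [← setIntegral_univ, ← hUnion,
      integral_biUnion_finset S (fun x _ => hFmeas x) hdisj (fun x _ => hθint.integrableOn)]
    refine (Finset.sum_congr rfl fun x _ => ?_).symm
    have : ∫ ω in F x, mYx μ Y D T X (X ω) * pDTx μ D T X true true (X ω) ∂μ
        = ∫ _ω in F x, mYx μ Y D T X x * pDTx μ D T X true true x ∂μ := by
      refine setIntegral_congr_fun (hFmeas x) fun ω hω => ?_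
      have hXx : X ω = x := hω
      rw [hXx]
    rw [this, setIntegral_const, smul_eq_mul, measureReal_def]
    rw [show (μ (F x)).toReal * (mYx μ Y D T X x * pDTx μ D T X true true x)
        = mYx μ Y D T X x * (pDTx μ D T X true true x * (μ (F x)).toReal) by ring,
      hpmul true true x]
  -- conclude
  rw [show (∫ ω,
        (pDTx μ D T X true true (X ω) / pDT)
          * (indDT D T true true ω / pDTx μ D T X true true (X ω)
              * (Y ω - mY μ Y D T X true true (X ω))
            - indDT D T true false ω / pDTx μ D T X true false (X ω)
              * (Y ω - mY μ Y D T X true false (X ω))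
            - indDT D T false true ω / pDTx μ D T X false true (X ω)
              * (Y ω - mY μ Y D T X false true (X ω))
            + indDT D T false false ω / pDTx μ D T X false false (X ω)
              * (Y ω - mY μ Y D T X false false (X ω)))
        + (indDT D T true true ω / pDT) * (mYx μ Y D T X (X ω) - θ) ∂μ)
      = ∫ ω, f ω ∂μ from rfl]
  rw [hsplit]
  have : ∀ x ∈ S, ∫ ω in F x, f ω ∂μ
      = (μ (Ev D T X true true x)).toReal * ((mYx μ Y D T X x - θ) / pDT) :=
    fun x _ => hfiber x
  rw [Finset.sum_congr rfl this]
  have hexp : ∑ x ∈ S, (μ (Ev D T X true true x)).toReal * ((mYx μ Y D T X x - θ) / pDT)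
      = ((∑ x ∈ S, mYx μ Y D T X x * (μ (Ev D T X true true x)).toReal)
        - θ * (∑ x ∈ S, (μ (Ev D T X true true x)).toReal)) / pDT := by
    rw [Finset.mul_sum, ← Finset.sum_sub_distrib, Finset.sum_div]
    refine Finset.sum_congr rfl fun x _ => ?_
    ring
  rw [hexp, hsum1, hsum2]
  simp
end

section
/- The panel efficient influence function has mean zero: under the panel difference-in-differences identification assumptions, E[ (p_D(X)/p_D) ( (D/p_D(X))(ΔY - m_{ΔY}(1,X)) - ((1-D)/(1-p_D(X)))(ΔY - m_{ΔY}(0,X)) ) + (D/p_D)(m_{ΔY}(X) - theta) ] = 0, where ΔY = Y(1) - Y(0), m_{ΔY}(d,x) = E[ΔY | D=d, X=x], m_{ΔY}(x) = m_{ΔY}(1,x) - m_{ΔY}(0,x), and theta = E[ m_{ΔY}(X) p_D(X) ] / p_D. -/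
open MeasureTheory

/-- `Pr(D = 1 | X = x)`. -/
noncomputable def pDx {Ω 𝒳 : Type*} [MeasurableSpace Ω] (μ : Measure Ω)
    (D : Ω → Bool) (X : Ω → 𝒳) (x : 𝒳) : ℝ :=
  (μ {ω | D ω = true ∧ X ω = x}).toReal / (μ {ω | X ω = x}).toReal

/-- `m_{ΔY}(d, x) = E[ΔY | D=d, X=x]`. -/
noncomputable def mDY {Ω 𝒳 : Type*} [MeasurableSpace Ω] (μ : Measure Ω)
    (Y0 Y1 : Ω → ℝ) (D : Ω → Bool) (X : Ω → 𝒳) (d : Bool) (x : 𝒳) : ℝ :=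
  cexp μ (fun ω => Y1 ω - Y0 ω) {ω | D ω = d ∧ X ω = x}

/-- set integral equals conditional expectation times measure. -/
lemma setIntegral_eq_cexp_mul {Ω : Type*} [MeasurableSpace Ω] (μ : Measure Ω)
    [IsProbabilityMeasure μ] (f : Ω → ℝ) (A : Set Ω) :
    ∫ ω in A, f ω ∂μ = cexp μ f A * (μ A).toReal := by
  unfold cexp
  by_cases h : (μ A).toReal = 0
  · have h0 : μ A = 0 := by
      rcases (ENNReal.toReal_eq_zero_iff _).1 h with h' | h'
      · exact h'
      · exact absurd h' (measure_ne_top μ A)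
    rw [h, mul_zero, Measure.restrict_eq_zero.2 h0, integral_zero_measure]
  · exact (div_mul_cancel₀ _ h).symm

/-- a function of `(D ω, X ω)` written as a finite indicator sum is measurable. -/
lemma measurable_of_DX {Ω 𝒳 : Type*} [MeasurableSpace Ω] [MeasurableSpace 𝒳]
    [MeasurableSingletonClass 𝒳] {D : Ω → Bool} {X : Ω → 𝒳}
    (hD : Measurable D) (hX : Measurable X) (hXfin : (Set.range X).Finite)
    (a : Bool → 𝒳 → ℝ) : Measurable fun ω => a (D ω) (X ω) := by
  have key : (fun ω => a (D ω) (X ω)) =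
      fun ω => ∑ x ∈ hXfin.toFinset, Set.indicator {ω' | X ω' = x} (fun ω' => a (D ω') x) ω := by
    funext ω
    rw [Finset.sum_eq_single (X ω)]
    · simp [Set.indicator]
    · intro x _ hne
      exact Set.indicator_of_notMem (fun h => hne (h.symm)) _
    · intro h
      exact absurd (hXfin.mem_toFinset.2 ⟨ω, rfl⟩) h
  rw [key]
  refine Finset.measurable_sum _ fun x _ => Measurable.indicator ?_ ?_
  · exact (Measurable.of_discrete (f := fun d => a d x)).comp hD
  · exact hX (measurableSet_singleton x)

/-- a bounded-coefficient combination is integrable. -/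
lemma integrable_of_DX {Ω 𝒳 : Type*} [MeasurableSpace Ω] [MeasurableSpace 𝒳]
    [MeasurableSingletonClass 𝒳] {μ : Measure Ω} [IsProbabilityMeasure μ]
    {D : Ω → Bool} {X : Ω → 𝒳}
    (hD : Measurable D) (hX : Measurable X) (hXfin : (Set.range X).Finite)
    (a : Bool → 𝒳 → ℝ) {f : Ω → ℝ} (hf : Integrable f μ) :
    Integrable (fun ω => a (D ω) (X ω) * f ω) μ := by
  refine hf.bdd_mul (c := ∑ x ∈ hXfin.toFinset, (|a true x| + |a false x|))
    ((measurable_of_DX hD hX hXfin a).aestronglyMeasurable) (Filter.Eventually.of_forall fun ω => ?_)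
  have hx : X ω ∈ hXfin.toFinset := hXfin.mem_toFinset.2 ⟨ω, rfl⟩
  have h1 : ‖a (D ω) (X ω)‖ ≤ |a true (X ω)| + |a false (X ω)| := by
    rw [Real.norm_eq_abs]
    cases D ω
    · exact le_add_of_nonneg_left (abs_nonneg _)
    · exact le_add_of_nonneg_right (abs_nonneg _)
  refine h1.trans (Finset.single_le_sum (f := fun x => |a true x| + |a false x|) (fun x _ => by positivity) hx)

/-- partitioning an integral over the fibers of `X`. -/
lemma integral_fiber_sum {Ω 𝒳 : Type*} [MeasurableSpace Ω] [MeasurableSpace 𝒳]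
    [MeasurableSingletonClass 𝒳] (μ : Measure Ω) {X : Ω → 𝒳}
    (hX : Measurable X) (hXfin : (Set.range X).Finite)
    {g : Ω → ℝ} (hg : Integrable g μ) :
    ∫ ω, g ω ∂μ = ∑ x ∈ hXfin.toFinset, ∫ ω in {ω | X ω = x}, g ω ∂μ := by
  have huniv : (Set.univ : Set Ω) = ⋃ x ∈ hXfin.toFinset, {ω | X ω = x} := by
    ext ω
    simp only [Set.mem_univ, Set.mem_iUnion, true_iff]
    exact ⟨X ω, hXfin.mem_toFinset.2 ⟨ω, rfl⟩, rfl⟩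
  rw [← setIntegral_univ, huniv]
  refine integral_biUnion_finset _ (fun x _ => hX (measurableSet_singleton x)) ?_
    (fun x _ => hg.integrableOn)
  intro x _ y _ hxy
  rw [Function.onFun, Set.disjoint_left]
  rintro ω (hx : X ω = x) (hy : X ω = y)
  exact hxy (hx ▸ hy)

/-- The panel efficient influence function has mean zero, where
`θ = E[m_{ΔY}(X) p_D(X)] / p_D` with `m_{ΔY}(x) = m_{ΔY}(1,x) - m_{ΔY}(0,x)`. -/
theorem panel_eif_mean_zero
    {Ω 𝒳 : Type*} [MeasurableSpace Ω] [MeasurableSpace 𝒳] [MeasurableSingletonClass 𝒳]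
    (μ : Measure Ω) [IsProbabilityMeasure μ]
    (Y0 Y1 : Ω → ℝ) (D : Ω → Bool) (X : Ω → 𝒳)
    (hD : Measurable D) (hX : Measurable X)
    (hXfin : (Set.range X).Finite)
    (hΔint : Integrable (fun ω => Y1 ω - Y0 ω) μ)
    -- common support: p_D(x) ∈ (0,1) on the support of X
    (hCS : ∀ x, 0 < μ {ω | X ω = x} →
      0 < μ {ω | D ω = true ∧ X ω = x} ∧ 0 < μ {ω | D ω = false ∧ X ω = x})
    -- p_D = Pr(D=1) > 0
    (pD : ℝ) (hpD : pD = (μ {ω | D ω = true}).toReal) (hpDpos : 0 < pD)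
    (θ : ℝ)
    (hθ : θ = (∫ ω, (mDY μ Y0 Y1 D X true (X ω) - mDY μ Y0 Y1 D X false (X ω))
                * pDx μ D X (X ω) ∂μ) / pD) :
    ∫ ω,
        (pDx μ D X (X ω) / pD)
          * ((if D ω then (1:ℝ) else 0) / pDx μ D X (X ω)
              * (Y1 ω - Y0 ω - mDY μ Y0 Y1 D X true (X ω))
            - (if D ω then (0:ℝ) else 1) / (1 - pDx μ D X (X ω))
              * (Y1 ω - Y0 ω - mDY μ Y0 Y1 D X false (X ω)))
        + ((if D ω then (1:ℝ) else 0) / pD)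
            * ((mDY μ Y0 Y1 D X true (X ω) - mDY μ Y0 Y1 D X false (X ω)) - θ) ∂μ = 0 := by
  have hpD0 : pD ≠ 0 := ne_of_gt hpDpos
  have hAmeas : ∀ (d : Bool) (x : 𝒳), MeasurableSet {ω | D ω = d ∧ X ω = x} := fun d x =>
    (hD (measurableSet_singleton d)).inter (hX (measurableSet_singleton x))
  have hXmeas : ∀ x : 𝒳, MeasurableSet {ω | X ω = x} := fun x => hX (measurableSet_singleton x)
  have key : ∀ (d : Bool) (x : 𝒳), ∫ ω in {ω | D ω = d ∧ X ω = x}, (Y1 ω - Y0 ω) ∂μ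
      = mDY μ Y0 Y1 D X d x * (μ {ω | D ω = d ∧ X ω = x}).toReal := fun d x => by
    simpa [mDY] using setIntegral_eq_cexp_mul μ (fun ω => Y1 ω - Y0 ω) {ω | D ω = d ∧ X ω = x}
  -- integrability of the influence function
  have h1 := integrable_of_DX (μ := μ) hD hX hXfin
    (fun d x => pDx μ D X x / pD * ((if d then (1:ℝ) else 0) / pDx μ D X x
      - (if d then (0:ℝ) else 1) / (1 - pDx μ D X x))) hΔint
  have h2 := integrable_of_DX (μ := μ) hD hX hXfin
    (fun d x => pDx μ D X x / pD
        * (-((if d then (1:ℝ) else 0) / pDx μ D X x * mDY μ Y0 Y1 D X true x)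
          + (if d then (0:ℝ) else 1) / (1 - pDx μ D X x) * mDY μ Y0 Y1 D X false x)
      + ((if d then (1:ℝ) else 0) / pD)
          * ((mDY μ Y0 Y1 D X true x - mDY μ Y0 Y1 D X false x) - θ))
    (integrable_const (1:ℝ))
  have hFint : Integrable (fun ω =>
      (pDx μ D X (X ω) / pD)
          * ((if D ω then (1:ℝ) else 0) / pDx μ D X (X ω)
              * (Y1 ω - Y0 ω - mDY μ Y0 Y1 D X true (X ω))
            - (if D ω then (0:ℝ) else 1) / (1 - pDx μ D X (X ω))
              * (Y1 ω - Y0 ω - mDY μ Y0 Y1 D X false (X ω)))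
        + ((if D ω then (1:ℝ) else 0) / pD)
            * ((mDY μ Y0 Y1 D X true (X ω) - mDY μ Y0 Y1 D X false (X ω)) - θ)) μ := by
    refine (h1.add h2).congr (Filter.Eventually.of_forall fun ω => ?_)
    simp only [Pi.add_apply]
    beta_reduce
    cases hd : D ω <;> simp <;> ring
  -- generic piece computation
  have hpiece : ∀ (d : Bool) (x : 𝒳) (c e : ℝ),
      (∫ ω in {ω | D ω = d ∧ X ω = x},
          (c * ((Y1 ω - Y0 ω) - mDY μ Y0 Y1 D X d x) + e) ∂μ)
        = e * (μ {ω | D ω = d ∧ X ω = x}).toReal := by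
    intro d x c e
    have ha : Integrable (fun ω => c * (Y1 ω - Y0 ω - mDY μ Y0 Y1 D X d x))
        (μ.restrict {ω | D ω = d ∧ X ω = x}) :=
      ((hΔint.sub (integrable_const _)).const_mul c).integrableOn
    have hb : Integrable (fun ω => Y1 ω - Y0 ω) (μ.restrict {ω | D ω = d ∧ X ω = x}) :=
      hΔint.integrableOn
    rw [integral_add ha (integrable_const e), integral_const_mul,
      integral_sub hb (integrable_const _),
      setIntegral_const, setIntegral_const, smul_eq_mul, smul_eq_mul, measureReal_def, key d x]
    ring
  -- the D = true piece
  have hI1 : ∀ x : 𝒳,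
      (∫ ω in {ω | D ω = true ∧ X ω = x},
        ((pDx μ D X (X ω) / pD)
          * ((if D ω then (1:ℝ) else 0) / pDx μ D X (X ω)
              * (Y1 ω - Y0 ω - mDY μ Y0 Y1 D X true (X ω))
            - (if D ω then (0:ℝ) else 1) / (1 - pDx μ D X (X ω))
              * (Y1 ω - Y0 ω - mDY μ Y0 Y1 D X false (X ω)))
        + ((if D ω then (1:ℝ) else 0) / pD)
            * ((mDY μ Y0 Y1 D X true (X ω) - mDY μ Y0 Y1 D X false (X ω)) - θ)) ∂μ)
      = (1 / pD) * ((mDY μ Y0 Y1 D X true x - mDY μ Y0 Y1 D X false x) - θ)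
          * (μ {ω | D ω = true ∧ X ω = x}).toReal := by
    intro x
    rw [setIntegral_congr_fun (hAmeas true x) (g := fun ω =>
        (pDx μ D X x / pD * (1 / pDx μ D X x)) * ((Y1 ω - Y0 ω) - mDY μ Y0 Y1 D X true x)
          + (1 / pD) * ((mDY μ Y0 Y1 D X true x - mDY μ Y0 Y1 D X false x) - θ)) ?_,
      hpiece true x _ _]
    rintro ω ⟨hd, hx⟩
    beta_reduce
    rw [hd, hx]
    simp
    ring
  -- the D = false piece
  have hI0 : ∀ x : 𝒳,
      (∫ ω in {ω | D ω = false ∧ X ω = x},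
        ((pDx μ D X (X ω) / pD)
          * ((if D ω then (1:ℝ) else 0) / pDx μ D X (X ω)
              * (Y1 ω - Y0 ω - mDY μ Y0 Y1 D X true (X ω))
            - (if D ω then (0:ℝ) else 1) / (1 - pDx μ D X (X ω))
              * (Y1 ω - Y0 ω - mDY μ Y0 Y1 D X false (X ω)))
        + ((if D ω then (1:ℝ) else 0) / pD)
            * ((mDY μ Y0 Y1 D X true (X ω) - mDY μ Y0 Y1 D X false (X ω)) - θ)) ∂μ) = 0 := by
    intro x
    rw [setIntegral_congr_fun (hAmeas false x) (g := fun ω =>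
        (-(pDx μ D X x / pD * (1 / (1 - pDx μ D X x))))
          * ((Y1 ω - Y0 ω) - mDY μ Y0 Y1 D X false x) + 0) ?_,
      hpiece false x _ _, zero_mul]
    rintro ω ⟨hd, hx⟩
    beta_reduce
    rw [hd, hx]
    simp
    ring
  -- splitting each fiber by treatment status
  have hsplit : ∀ x : 𝒳,
      (∫ ω in {ω | X ω = x},
        ((pDx μ D X (X ω) / pD)
          * ((if D ω then (1:ℝ) else 0) / pDx μ D X (X ω)
              * (Y1 ω - Y0 ω - mDY μ Y0 Y1 D X true (X ω))
            - (if D ω then (0:ℝ) else 1) / (1 - pDx μ D X (X ω))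
              * (Y1 ω - Y0 ω - mDY μ Y0 Y1 D X false (X ω)))
        + ((if D ω then (1:ℝ) else 0) / pD)
            * ((mDY μ Y0 Y1 D X true (X ω) - mDY μ Y0 Y1 D X false (X ω)) - θ)) ∂μ)
      = (1 / pD) * ((mDY μ Y0 Y1 D X true x - mDY μ Y0 Y1 D X false x) - θ)
          * (μ {ω | D ω = true ∧ X ω = x}).toReal := by
    intro x
    have hu : {ω | X ω = x} = {ω | D ω = true ∧ X ω = x} ∪ {ω | D ω = false ∧ X ω = x} := by
      ext ω
      simp only [Set.mem_setOf_eq, Set.mem_union]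
      cases hd : D ω <;> simp
    have hdisj : Disjoint {ω | D ω = true ∧ X ω = x} {ω | D ω = false ∧ X ω = x} := by
      rw [Set.disjoint_left]
      rintro ω ⟨h1', -⟩ ⟨h2', -⟩
      rw [h1'] at h2'
      exact Bool.noConfusion h2'
    rw [hu, setIntegral_union hdisj (hAmeas false x) hFint.integrableOn hFint.integrableOn,
      hI1 x, hI0 x, add_zero]
  -- total mass of the treated group
  have S1 : pD = ∑ x ∈ hXfin.toFinset, (μ {ω | D ω = true ∧ X ω = x}).toReal := by
    have hset : {ω | D ω = true} = ⋃ x ∈ hXfin.toFinset, {ω | D ω = true ∧ X ω = x} := by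
      ext ω
      simp only [Set.mem_setOf_eq, Set.mem_iUnion]
      constructor
      · intro h
        exact ⟨X ω, hXfin.mem_toFinset.2 ⟨ω, rfl⟩, h, rfl⟩
      · rintro ⟨x, -, h, -⟩
        exact h
    have hdisj : (↑hXfin.toFinset : Set 𝒳).PairwiseDisjoint
        (fun x => {ω | D ω = true ∧ X ω = x}) := by
      intro x _ y _ hxy
      rw [Function.onFun, Set.disjoint_left]
      rintro ω ⟨-, hx'⟩ ⟨-, hy'⟩
      exact hxy (hx' ▸ hy')
    rw [hpD, hset, measure_biUnion_finset hdisj (fun x _ => hAmeas true x),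
      ENNReal.toReal_sum (fun x _ => measure_ne_top μ _)]
  -- the θ identity
  have S2 : ∑ x ∈ hXfin.toFinset,
      (mDY μ Y0 Y1 D X true x - mDY μ Y0 Y1 D X false x)
        * (μ {ω | D ω = true ∧ X ω = x}).toReal = θ * pD := by
    have hint2 : Integrable (fun ω =>
        (mDY μ Y0 Y1 D X true (X ω) - mDY μ Y0 Y1 D X false (X ω)) * pDx μ D X (X ω)) μ := by
      simpa using integrable_of_DX (μ := μ) hD hX hXfin
        (fun d x => (mDY μ Y0 Y1 D X true x - mDY μ Y0 Y1 D X false x) * pDx μ D X x)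
        (integrable_const (1:ℝ))
    have hfib : ∀ x : 𝒳, (∫ ω in {ω | X ω = x},
        ((mDY μ Y0 Y1 D X true (X ω) - mDY μ Y0 Y1 D X false (X ω)) * pDx μ D X (X ω)) ∂μ)
        = (mDY μ Y0 Y1 D X true x - mDY μ Y0 Y1 D X false x)
            * (μ {ω | D ω = true ∧ X ω = x}).toReal := by
      intro x
      have heq : Set.EqOn
          (fun ω => (mDY μ Y0 Y1 D X true (X ω) - mDY μ Y0 Y1 D X false (X ω)) * pDx μ D X (X ω))
          (fun _ => (mDY μ Y0 Y1 D X true x - mDY μ Y0 Y1 D X false x) * pDx μ D X x)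
          {ω | X ω = x} := by
        intro ω hx
        simp only [Set.mem_setOf_eq] at hx
        beta_reduce
        rw [hx]
      rw [setIntegral_congr_fun (hXmeas x) heq, setIntegral_const, smul_eq_mul, measureReal_def]
      by_cases h0 : (μ {ω | X ω = x}).toReal = 0
      · have hXz : μ {ω | X ω = x} = 0 := by
          rcases (ENNReal.toReal_eq_zero_iff _).1 h0 with h | h
          · exact h
          · exact absurd h (measure_ne_top μ _)
        have hz : μ {ω | D ω = true ∧ X ω = x} = 0 :=
          measure_mono_null (fun ω hω => hω.2) hXz
        simp [h0, hz]
      · have hpx : pDx μ D X x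
            = (μ {ω | D ω = true ∧ X ω = x}).toReal / (μ {ω | X ω = x}).toReal := rfl
        rw [hpx]
        field_simp
    have hθ' : (∫ ω, ((mDY μ Y0 Y1 D X true (X ω) - mDY μ Y0 Y1 D X false (X ω))
        * pDx μ D X (X ω)) ∂μ) = θ * pD := by
      rw [hθ]
      field_simp
    calc ∑ x ∈ hXfin.toFinset,
          (mDY μ Y0 Y1 D X true x - mDY μ Y0 Y1 D X false x)
            * (μ {ω | D ω = true ∧ X ω = x}).toReal
        = ∑ x ∈ hXfin.toFinset, ∫ ω in {ω | X ω = x},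
            ((mDY μ Y0 Y1 D X true (X ω) - mDY μ Y0 Y1 D X false (X ω))
              * pDx μ D X (X ω)) ∂μ := (Finset.sum_congr rfl fun x _ => (hfib x).symm)
      _ = ∫ ω, ((mDY μ Y0 Y1 D X true (X ω) - mDY μ Y0 Y1 D X false (X ω))
              * pDx μ D X (X ω)) ∂μ := (integral_fiber_sum μ hX hXfin hint2).symm
      _ = θ * pD := hθ'
  -- put everything together
  rw [integral_fiber_sum μ hX hXfin hFint]
  have hsum : ∑ x ∈ hXfin.toFinset, (1 / pD)
        * ((mDY μ Y0 Y1 D X true x - mDY μ Y0 Y1 D X false x) - θ)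
        * (μ {ω | D ω = true ∧ X ω = x}).toReal
      = (1 / pD) * ((∑ x ∈ hXfin.toFinset,
          (mDY μ Y0 Y1 D X true x - mDY μ Y0 Y1 D X false x)
            * (μ {ω | D ω = true ∧ X ω = x}).toReal)
        - θ * ∑ x ∈ hXfin.toFinset, (μ {ω | D ω = true ∧ X ω = x}).toReal) := by
    simp only [mul_sub, Finset.mul_sum, ← Finset.sum_sub_distrib]
    exact Finset.sum_congr rfl fun x _ => by ring
  calc ∑ x ∈ hXfin.toFinset, _ = ∑ x ∈ hXfin.toFinset, (1 / pD)
        * ((mDY μ Y0 Y1 D X true x - mDY μ Y0 Y1 D X false x) - θ)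
        * (μ {ω | D ω = true ∧ X ω = x}).toReal := Finset.sum_congr rfl fun x _ => hsplit x
    _ = 0 := by
        rw [hsum, S2, ← S1]
        ring
end

section
/- Double robustness decomposition: for binary G with q(x) = Pr(G=1|X=x) in (0,1), candidate functions q̂, m̂ with q̂ bounded away from 0, and m(x) = E[Ỹ | G=1, X=x], the expected estimation error satisfies E[ (G/q̂(X)) (Ỹ - m̂(X)) + m̂(X) - ( (G/q(X))(Ỹ - m(X)) + m(X) ) ] = E[ (q(X)/q̂(X) - 1)(m(X) - m̂(X)) ]; in particular it vanishes if either q̂ = q or m̂ = m. -/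
open MeasureTheory

/-- `q(x) = Pr(G = 1 | X = x)`. -/
noncomputable def qx {Ω 𝒳 : Type*} [MeasurableSpace Ω] (μ : Measure Ω)
    (G : Ω → Bool) (X : Ω → 𝒳) (x : 𝒳) : ℝ :=
  (μ {ω | G ω = true ∧ X ω = x}).toReal / (μ {ω | X ω = x}).toReal

/-- `m(x) = E[Ỹ | G = 1, X = x]`. -/
noncomputable def mx {Ω 𝒳 : Type*} [MeasurableSpace Ω] (μ : Measure Ω)
    (Y : Ω → ℝ) (G : Ω → Bool) (X : Ω → 𝒳) (x : 𝒳) : ℝ :=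
  cexp μ Y {ω | G ω = true ∧ X ω = x}

/-- Double robustness decomposition:
`E[(G/q̂(X))(Ỹ - m̂(X)) + m̂(X) - ((G/q(X))(Ỹ - m(X)) + m(X))]
  = E[(q(X)/q̂(X) - 1)(m(X) - m̂(X))]`,
and in particular it vanishes if either `q̂ = q` or `m̂ = m`. -/
theorem double_robustness_decomposition
    {Ω 𝒳 : Type*} [MeasurableSpace Ω] [MeasurableSpace 𝒳] [MeasurableSingletonClass 𝒳]
    (μ : Measure Ω) [IsProbabilityMeasure μ]
    (Y : Ω → ℝ) (G : Ω → Bool) (X : Ω → 𝒳)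
    (hG : Measurable G) (hX : Measurable X)
    (hXfin : (Set.range X).Finite)
    (hYint : Integrable Y μ)
    -- q(x) ∈ (0,1) on the support of X
    (hq : ∀ x, 0 < μ {ω | X ω = x} → 0 < qx μ G X x ∧ qx μ G X x < 1)
    (ε : ℝ) (hε : 0 < ε)
    (qhat mhat : 𝒳 → ℝ)
    (hqhat : ∀ x, ε < qhat x ∧ qhat x < 1)
    (hmhat : ∃ C, ∀ x, |mhat x| ≤ C) :
    (∫ ω,
        ((if G ω then (1:ℝ) else 0) / qhat (X ω)) * (Y ω - mhat (X ω)) + mhat (X ω)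
          - (((if G ω then (1:ℝ) else 0) / qx μ G X (X ω)) * (Y ω - mx μ Y G X (X ω))
              + mx μ Y G X (X ω)) ∂μ)
      = ∫ ω, (qx μ G X (X ω) / qhat (X ω) - 1) * (mx μ Y G X (X ω) - mhat (X ω)) ∂μ
    ∧ (((∀ x, qhat x = qx μ G X x) ∨ (∀ x, mhat x = mx μ Y G X x)) →
        (∫ ω,
          ((if G ω then (1:ℝ) else 0) / qhat (X ω)) * (Y ω - mhat (X ω)) + mhat (X ω)
            - (((if G ω then (1:ℝ) else 0) / qx μ G X (X ω)) * (Y ω - mx μ Y G X (X ω))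
                + mx μ Y G X (X ω)) ∂μ) = 0) := by

  classical
  have hA : ∀ x : 𝒳, MeasurableSet {ω | X ω = x} := fun x => hX (measurableSet_singleton x)
  have hGS : MeasurableSet {ω | G ω = true} := hG (measurableSet_singleton true)
  set s : Finset 𝒳 := hXfin.toFinset with hs
  have hmem : ∀ ω, X ω ∈ s := fun ω => hXfin.mem_toFinset.mpr ⟨ω, rfl⟩
  -- measurability of compositions with X
  have hmeasc : ∀ c : 𝒳 → ℝ, Measurable fun ω => c (X ω) := by
    intro c
    have h : (fun ω => c (X ω)) = fun ω => ∑ x ∈ s, if X ω = x then c x else 0 := by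
      funext ω
      rw [Finset.sum_ite_eq s (X ω) c, if_pos (hmem ω)]
    rw [h]
    exact Finset.measurable_sum _ fun x _ =>
      Measurable.ite (hA x) measurable_const measurable_const
  have hbd : ∀ c : 𝒳 → ℝ, ∀ ω, |c (X ω)| ≤ ∑ x ∈ s, |c x| := fun c ω =>
    Finset.single_le_sum (f := fun x => |c x|) (fun i _ => abs_nonneg _) (hmem ω)
  have hintc : ∀ c : 𝒳 → ℝ, Integrable (fun ω => c (X ω)) μ := by
    intro c
    refine (integrable_const (∑ x ∈ s, |c x|)).mono'
      (hmeasc c).aestronglyMeasurable (ae_of_all _ fun ω => ?_)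
    simpa [Real.norm_eq_abs] using hbd c ω
  have hW : Measurable fun ω => (if G ω then (1:ℝ) else 0) :=
    Measurable.ite hGS measurable_const measurable_const
  have hWCbd : ∀ c : 𝒳 → ℝ, ∀ ω,
      ‖(if G ω then (1:ℝ) else 0) * c (X ω)‖ ≤ ∑ x ∈ s, |c x| := by
    intro c ω
    rw [Real.norm_eq_abs, abs_mul]
    have h1 : |(if G ω then (1:ℝ) else 0)| ≤ 1 := by by_cases h : G ω <;> simp [h]
    calc |(if G ω then (1:ℝ) else 0)| * |c (X ω)| ≤ 1 * |c (X ω)| :=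
          mul_le_mul_of_nonneg_right h1 (abs_nonneg _)
      _ = |c (X ω)| := one_mul _
      _ ≤ _ := hbd c ω
  have hintWc : ∀ c : 𝒳 → ℝ,
      Integrable (fun ω => (if G ω then (1:ℝ) else 0) * c (X ω)) μ := by
    intro c
    exact (integrable_const (∑ x ∈ s, |c x|)).mono'
      ((hW.mul (hmeasc c)).aestronglyMeasurable) (ae_of_all _ fun ω => hWCbd c ω)
  have hintWcY : ∀ c : 𝒳 → ℝ,
      Integrable (fun ω => (if G ω then (1:ℝ) else 0) * c (X ω) * Y ω) μ := by
    intro c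
    exact hYint.bdd_mul ((hW.mul (hmeasc c)).aestronglyMeasurable)
      (ae_of_all _ fun ω => hWCbd c ω)
  -- partition of the integral over fibers of X
  have hpart : ∀ g : Ω → ℝ, Integrable g μ →
      ∫ ω, g ω ∂μ = ∑ x ∈ s, ∫ ω in {ω | X ω = x}, g ω ∂μ := by
    intro g hg
    have hU : (⋃ x ∈ s, {ω | X ω = x}) = Set.univ := by
      ext ω
      simp only [Set.mem_iUnion, Set.mem_setOf_eq, Set.mem_univ, iff_true]
      exact ⟨X ω, hmem ω, rfl⟩
    have hdisj : (↑s : Set 𝒳).Pairwise (Function.onFun Disjoint fun x => {ω | X ω = x}) := by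
      intro x _ y _ hxy
      exact Set.disjoint_left.mpr fun ω hx hy => hxy (by
        simp only [Set.mem_setOf_eq] at hx hy; rw [← hx, hy])
    rw [← setIntegral_univ (f := g) (μ := μ), ← hU,
      integral_biUnion_finset s (fun x _ => hA x) hdisj (fun x _ => hg.integrableOn)]
  -- indicator rewriting
  have hindY : ∀ f : Ω → ℝ, ∀ ω, (if G ω then (1:ℝ) else 0) * f ω
      = Set.indicator {ω | G ω = true} f ω := by
    intro f ω
    by_cases h : G ω <;> simp [Set.indicator_apply, h]
  have hAB : ∀ x : 𝒳, {ω | X ω = x} ∩ {ω | G ω = true} = {ω | G ω = true ∧ X ω = x} := by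
    intro x; ext ω; simp only [Set.mem_inter_iff, Set.mem_setOf_eq]; tauto
  -- per-fiber computation of integrals of the canonical shape
  have hfiber : ∀ c1 c2 c3 : 𝒳 → ℝ, ∀ x : 𝒳,
      (∫ ω in {ω | X ω = x},
        ((if G ω then (1:ℝ) else 0) * c1 (X ω) * Y ω
          + ((if G ω then (1:ℝ) else 0) * c2 (X ω) + c3 (X ω))) ∂μ)
      = c1 x * (∫ ω in {ω | G ω = true ∧ X ω = x}, Y ω ∂μ)
        + c2 x * (μ {ω | G ω = true ∧ X ω = x}).toReal
        + c3 x * (μ {ω | X ω = x}).toReal := by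
    intro c1 c2 c3 x
    have hcongr : Set.EqOn
        (fun ω => (if G ω then (1:ℝ) else 0) * c1 (X ω) * Y ω
          + ((if G ω then (1:ℝ) else 0) * c2 (X ω) + c3 (X ω)))
        (fun ω => c1 x * Set.indicator {ω | G ω = true} Y ω
          + (c2 x * Set.indicator {ω | G ω = true} (fun _ => (1:ℝ)) ω + c3 x))
        {ω | X ω = x} := by
      intro ω hω
      simp only [Set.mem_setOf_eq] at hω
      simp only [hω]
      rw [← hindY Y ω, ← hindY (fun _ => (1:ℝ)) ω]
      ring
    rw [setIntegral_congr_fun (hA x) hcongr]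
    have hi1 : IntegrableOn (fun ω => c1 x * Set.indicator {ω | G ω = true} Y ω)
        {ω | X ω = x} μ := ((hYint.indicator hGS).const_mul (c1 x)).integrableOn
    have hi2a : IntegrableOn
        (fun ω => c2 x * Set.indicator {ω | G ω = true} (fun _ => (1:ℝ)) ω)
        {ω | X ω = x} μ :=
      (((integrable_const (1:ℝ) (μ := μ)).indicator hGS).const_mul (c2 x)).integrableOn
    have hi3 : IntegrableOn (fun _ => c3 x) {ω | X ω = x} μ :=
      (integrable_const (c3 x) (μ := μ)).integrableOn
    have hi2 : IntegrableOn
        (fun ω => c2 x * Set.indicator {ω | G ω = true} (fun _ => (1:ℝ)) ω + c3 x)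
        {ω | X ω = x} μ := by
      have := hi2a.add hi3; exact this
    rw [integral_add hi1 hi2, integral_add hi2a hi3]
    rw [integral_const_mul, integral_const_mul, setIntegral_indicator hGS,
      setIntegral_indicator hGS, hAB x, setIntegral_const, setIntegral_const]
    simp only [smul_eq_mul, mul_one, measureReal_def]
    ring
  -- the two integrand rewrites
  set c1 : 𝒳 → ℝ := fun x => 1 / qhat x - 1 / qx μ G X x with hc1
  set c2 : 𝒳 → ℝ := fun x => mx μ Y G X x / qx μ G X x - mhat x / qhat x with hc2
  set c3 : 𝒳 → ℝ := fun x => mhat x - mx μ Y G X x with hc3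
  set c4 : 𝒳 → ℝ := fun x => (qx μ G X x / qhat x - 1) * (mx μ Y G X x - mhat x) with hc4
  have hrew : ∀ ω,
      ((if G ω then (1:ℝ) else 0) / qhat (X ω)) * (Y ω - mhat (X ω)) + mhat (X ω)
        - (((if G ω then (1:ℝ) else 0) / qx μ G X (X ω)) * (Y ω - mx μ Y G X (X ω))
            + mx μ Y G X (X ω))
      = (if G ω then (1:ℝ) else 0) * c1 (X ω) * Y ω
          + ((if G ω then (1:ℝ) else 0) * c2 (X ω) + c3 (X ω)) := by
    intro ω
    simp only [hc1, hc2, hc3]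
    ring
  have hfiberc : ∀ c : 𝒳 → ℝ, ∀ x : 𝒳,
      (∫ ω in {ω | X ω = x}, c (X ω) ∂μ) = c x * (μ {ω | X ω = x}).toReal := by
    intro c x
    rw [setIntegral_congr_fun (hA x)
      (g := fun _ => c x) (fun ω hω => by
        simp only [Set.mem_setOf_eq] at hω; simp [hω]),
      setIntegral_const, smul_eq_mul, mul_comm, measureReal_def]
  have key :
      (∫ ω,
        ((if G ω then (1:ℝ) else 0) / qhat (X ω)) * (Y ω - mhat (X ω)) + mhat (X ω)
          - (((if G ω then (1:ℝ) else 0) / qx μ G X (X ω)) * (Y ω - mx μ Y G X (X ω))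
              + mx μ Y G X (X ω)) ∂μ)
      = ∫ ω, (qx μ G X (X ω) / qhat (X ω) - 1) * (mx μ Y G X (X ω) - mhat (X ω)) ∂μ := by
    simp only [hrew]
    have hintL : Integrable (fun ω =>
        (if G ω then (1:ℝ) else 0) * c1 (X ω) * Y ω
          + ((if G ω then (1:ℝ) else 0) * c2 (X ω) + c3 (X ω))) μ := by
      have := (hintWcY c1).add ((hintWc c2).add (hintc c3)); exact this
    have hRHSeq : (∫ ω, (qx μ G X (X ω) / qhat (X ω) - 1)
        * (mx μ Y G X (X ω) - mhat (X ω)) ∂μ) = ∫ ω, c4 (X ω) ∂μ := by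
      simp [hc4]
    rw [hpart _ hintL, hRHSeq, hpart _ (hintc c4)]
    refine Finset.sum_congr rfl fun x _ => ?_
    rw [hfiber c1 c2 c3 x, hfiberc c4 x]
    by_cases h0 : μ {ω | X ω = x} = 0
    · have hB0 : μ {ω | G ω = true ∧ X ω = x} = 0 := by
        refine measure_mono_null ?_ h0
        intro ω hω; exact hω.2
      rw [setIntegral_measure_zero _ hB0]
      simp [h0, hB0]
    · have hp : (μ {ω | X ω = x}).toReal ≠ 0 :=
        ENNReal.toReal_ne_zero.mpr ⟨h0, measure_ne_top μ _⟩
      have hI : (∫ ω in {ω | G ω = true ∧ X ω = x}, Y ω ∂μ)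
          = mx μ Y G X x * (μ {ω | G ω = true ∧ X ω = x}).toReal := by
        by_cases hpg : (μ {ω | G ω = true ∧ X ω = x}).toReal = 0
        · have hB0 : μ {ω | G ω = true ∧ X ω = x} = 0 := by
            have := measure_ne_top μ {ω | G ω = true ∧ X ω = x}
            exact (ENNReal.toReal_eq_zero_iff _).mp hpg |>.resolve_right this
          rw [setIntegral_measure_zero _ hB0, hpg, mul_zero]
        · rw [mx, cexp, div_mul_cancel₀ _ hpg]
      have hQp : qx μ G X x * (μ {ω | X ω = x}).toReal
          = (μ {ω | G ω = true ∧ X ω = x}).toReal := by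
        rw [qx, div_mul_cancel₀ _ hp]
      rw [hI, ← hQp]
      simp only [hc1, hc2, hc3, hc4]
      ring
  refine ⟨key, fun hcase => ?_⟩
  rw [key]
  rcases hcase with hqe | hme
  · have hz : ∀ ω, (qx μ G X (X ω) / qhat (X ω) - 1)
        * (mx μ Y G X (X ω) - mhat (X ω)) = 0 := by
      intro ω
      rw [← hqe (X ω), div_self (ne_of_gt (hε.trans (hqhat (X ω)).1))]
      ring
    simp only [hz, integral_zero]
  · have hz : ∀ ω, (qx μ G X (X ω) / qhat (X ω) - 1)
        * (mx μ Y G X (X ω) - mhat (X ω)) = 0 := by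
      intro ω
      rw [← hme (X ω), sub_self, mul_zero]
    simp only [hz, integral_zero]
end

section
/- Under the strong stationarity assumption (D,X) ⊥ T with T binary, the conditional second moment of the adjustment term D/p_D satisfies E[ (D/p_D)^2 | X ] = p_D(X)/p_D^2, and the excess over the CS-1 bound term is E[ (p_D(X)^2/p_D^2)(m(X)-theta)^2 (1/p_D(X)) (1/p_T - 1) ] >= 0, which is strictly positive whenever p_T < 1 and (m(X)-theta)^2 has positive expectation. -/
open MeasureTheory ProbabilityTheory

/-- Under strong stationarity `(D,X) ⟂ T`, `E[(D/p_D)² | X] = p_D(X)/p_D²`,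
and the excess over the CS-1 bound term
`E[(p_D(X)²/p_D²)(m(X)-θ)² (1/p_D(X)) (1/p_T - 1)]` is nonnegative, and strictly positive
whenever `p_T < 1` and `(m(X)-θ)²` has positive expectation. -/
theorem strong_stationarity_adjustment
    {Ω 𝒳 : Type*} [MeasurableSpace Ω] [MeasurableSpace 𝒳] [MeasurableSingletonClass 𝒳]
    (μ : Measure Ω) [IsProbabilityMeasure μ]
    (D T : Ω → Bool) (X : Ω → 𝒳)
    (hD : Measurable D) (hT : Measurable T) (hX : Measurable X)
    (hXfin : (Set.range X).Finite)
    -- strong stationarity: (D, X) ⟂ T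
    (hIndep : IndepFun (fun ω => (D ω, X ω)) T μ)
    -- p_D(x) ∈ (0,1) on the support of X
    (hpDx : ∀ x, 0 < μ {ω | X ω = x} → 0 < pDx μ D X x ∧ pDx μ D X x < 1)
    (pD : ℝ) (hpD : pD = (μ {ω | D ω = true}).toReal) (hpDpos : 0 < pD)
    (pT : ℝ) (hpT : pT = (μ {ω | T ω = true}).toReal) (hpT0 : 0 < pT) (hpT1 : pT < 1)
    (m : 𝒳 → ℝ) (θ : ℝ)
    (hm2 : Integrable (fun ω => (m (X ω) - θ) ^ 2) μ) :
    (∀ x, 0 < μ {ω | X ω = x} →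
      cexp μ (fun ω => ((if D ω then (1:ℝ) else 0) / pD) ^ 2) {ω | X ω = x}
        = pDx μ D X x / pD ^ 2)
    ∧ 0 ≤ ∫ ω, (pDx μ D X (X ω) ^ 2 / pD ^ 2) * (m (X ω) - θ) ^ 2
            * (1 / pDx μ D X (X ω)) * (1 / pT - 1) ∂μ
    ∧ (pT < 1 → 0 < ∫ ω, (m (X ω) - θ) ^ 2 ∂μ →
        0 < ∫ ω, (pDx μ D X (X ω) ^ 2 / pD ^ 2) * (m (X ω) - θ) ^ 2
              * (1 / pDx μ D X (X ω)) * (1 / pT - 1) ∂μ) := by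
  classical
  -- any preimage under X is measurable, since X has finite range
  have hXpre : ∀ s : Set 𝒳, MeasurableSet (X ⁻¹' s) := by
    intro s
    have h1 : X ⁻¹' s = X ⁻¹' (s ∩ Set.range X) := by
      ext ω; simp [Set.mem_preimage]
    rw [h1]
    exact hX ((hXfin.subset Set.inter_subset_right).measurableSet)
  have hcomp : ∀ g : 𝒳 → ℝ, Measurable fun ω => g (X ω) := by
    intro g s _
    exact hXpre (g ⁻¹' s)
  have hXset : ∀ x, MeasurableSet {ω | X ω = x} := by
    intro x
    have : {ω | X ω = x} = X ⁻¹' {x} := by ext ω; simp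
    rw [this]; exact hXpre _
  have hDset : MeasurableSet {ω | D ω = true} := hD (measurableSet_singleton true)
  have hpD2 : (0:ℝ) < pD ^ 2 := by positivity
  -- pDx is nonneg everywhere and zero off the support
  have hpDx_nonneg : ∀ x, 0 ≤ pDx μ D X x := by
    intro x; unfold pDx; positivity
  have hpDx_zero : ∀ x, μ {ω | X ω = x} = 0 → pDx μ D X x = 0 := by
    intro x hx; unfold pDx; rw [hx]; simp
  -- Part 1
  have part1 : ∀ x, 0 < μ {ω | X ω = x} →
      cexp μ (fun ω => ((if D ω then (1:ℝ) else 0) / pD) ^ 2) {ω | X ω = x}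
        = pDx μ D X x / pD ^ 2 := by
    intro x hx
    have hxt : 0 < (μ {ω | X ω = x}).toReal :=
      ENNReal.toReal_pos hx.ne' (measure_ne_top μ _)
    have hfun : (fun ω => ((if D ω then (1:ℝ) else 0) / pD) ^ 2)
        = Set.indicator {ω | D ω = true} (fun _ => 1 / pD ^ 2) := by
      ext ω
      by_cases h : D ω = true <;> simp [Set.indicator, h, div_pow]
    have hint : ∫ ω in {ω | X ω = x}, ((if D ω then (1:ℝ) else 0) / pD) ^ 2 ∂μ
        = (μ {ω | D ω = true ∧ X ω = x}).toReal * (1 / pD ^ 2) := by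
      rw [show (∫ ω in {ω | X ω = x}, ((if D ω then (1:ℝ) else 0) / pD) ^ 2 ∂μ)
          = ∫ ω in {ω | X ω = x}, Set.indicator {ω | D ω = true} (fun _ => 1 / pD ^ 2) ω ∂μ
          from by rw [hfun]]
      rw [setIntegral_indicator hDset]
      rw [setIntegral_const]
      have hset : {ω | X ω = x} ∩ {ω | D ω = true} = {ω | D ω = true ∧ X ω = x} := by
        ext ω; simp [and_comm]
      rw [hset]; simp [smul_eq_mul]; left; rfl
    unfold cexp pDx
    rw [hint]
    ring
  refine ⟨part1, ?_, ?_⟩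
  · -- nonnegativity: integrand is pointwise nonneg
    apply integral_nonneg
    intro ω
    have h1 : (0:ℝ) ≤ pDx μ D X (X ω) := hpDx_nonneg _
    have h2 : (0:ℝ) ≤ 1 / pT - 1 := by
      rw [sub_nonneg]
      rw [le_div_iff₀ hpT0]
      linarith
    positivity
  · intro hpT1' hm2pos
    -- the support-level setup
    set f : Ω → ℝ := fun ω => (pDx μ D X (X ω) ^ 2 / pD ^ 2) * (m (X ω) - θ) ^ 2
        * (1 / pDx μ D X (X ω)) * (1 / pT - 1) with hf
    have hT1 : (0:ℝ) < 1 / pT - 1 := by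
      rw [sub_pos, lt_div_iff₀ hpT0]; linarith
    -- a.e. ω, X ω lies in the support
    have hae : ∀ᵐ ω ∂μ, 0 < μ {ω' | X ω' = X ω} := by
      have hnull : μ {ω | ¬ 0 < μ {ω' | X ω' = X ω}} = 0 := by
        set Tb : Finset 𝒳 := hXfin.toFinset.filter (fun x => μ {ω' | X ω' = x} = 0) with hTb
        have hsub : {ω | ¬ 0 < μ {ω' | X ω' = X ω}} ⊆
            ⋃ x ∈ (Tb : Set 𝒳), {ω | X ω = x} := by
          intro ω hω
          simp only [Set.mem_setOf_eq, not_lt, le_zero_iff] at hω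
          refine Set.mem_biUnion ?_ rfl
          simp [hTb, Finset.mem_filter, hXfin.mem_toFinset, hω]
        refine measure_mono_null hsub ?_
        refine (measure_biUnion_null_iff Tb.countable_toSet).2 ?_
        intro x hx
        simp only [Finset.mem_coe, hTb, Finset.mem_filter] at hx
        exact hx.2
      filter_upwards [measure_eq_zero_iff_ae_notMem.mp hnull] with ω hω
      exact pos_iff_ne_zero.mpr (by simpa using hω)
    -- minimal value of pDx on the (finite, nonempty) support
    set S : Finset 𝒳 := {x ∈ hXfin.toFinset | 0 < μ {ω' | X ω' = x}} with hS
    have hne : (MeasureTheory.ae μ).NeBot := ae_neBot.2 (IsProbabilityMeasure.ne_zero μ)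
    obtain ⟨ω₀, hω₀⟩ := hae.exists
    have hSne : S.Nonempty := by
      refine ⟨X ω₀, ?_⟩
      simp only [hS, Finset.mem_filter, hXfin.mem_toFinset]
      exact ⟨Set.mem_range_self _, hω₀⟩
    set ε : ℝ := S.inf' hSne (pDx μ D X) with hε
    have hεpos : 0 < ε := by
      rw [hε, Finset.lt_inf'_iff]
      intro x hx
      simp only [hS, Finset.mem_filter] at hx
      exact (hpDx x hx.2).1
    -- pointwise structure of f on the support
    have hkey : ∀ ω, 0 < μ {ω' | X ω' = X ω} →
        f ω = pDx μ D X (X ω) / pD ^ 2 * (m (X ω) - θ) ^ 2 * (1 / pT - 1) := by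
      intro ω hω
      have hp := (hpDx (X ω) hω).1
      rw [hf]
      field_simp
    -- f is measurable
    have hfm : Measurable f := by
      have : f = fun ω => (fun x => (pDx μ D X x ^ 2 / pD ^ 2) * (m x - θ) ^ 2
          * (1 / pDx μ D X x) * (1 / pT - 1)) (X ω) := rfl
      rw [this]
      exact hcomp (fun x => pDx μ D X x ^ 2 / pD ^ 2 * (m x - θ) ^ 2
          * (1 / pDx μ D X x) * (1 / pT - 1))
    -- f is integrable: dominated by C * (m(X)-θ)^2
    have hfnonneg : ∀ ω, 0 ≤ f ω := by
      intro ω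
      have h1 : (0:ℝ) ≤ pDx μ D X (X ω) := hpDx_nonneg _
      rw [hf]
      positivity
    have hfle : ∀ ω, f ω ≤ (1 / pD ^ 2 * (1 / pT - 1)) * (m (X ω) - θ) ^ 2 := by
      intro ω
      by_cases hω : 0 < μ {ω' | X ω' = X ω}
      · rw [hkey ω hω]
        have hp1 : pDx μ D X (X ω) ≤ 1 := le_of_lt (hpDx (X ω) hω).2
        have hp0 : 0 ≤ pDx μ D X (X ω) := hpDx_nonneg _
        have h3 : pDx μ D X (X ω) / pD ^ 2 ≤ 1 / pD ^ 2 := by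
          gcongr
        calc pDx μ D X (X ω) / pD ^ 2 * (m (X ω) - θ) ^ 2 * (1 / pT - 1)
            = pDx μ D X (X ω) / pD ^ 2 * ((m (X ω) - θ) ^ 2 * (1 / pT - 1)) := by ring
          _ ≤ 1 / pD ^ 2 * ((m (X ω) - θ) ^ 2 * (1 / pT - 1)) :=
              mul_le_mul_of_nonneg_right h3 (by positivity)
          _ = 1 / pD ^ 2 * (1 / pT - 1) * (m (X ω) - θ) ^ 2 := by ring
      · have h0 : μ {ω' | X ω' = X ω} = 0 := le_antisymm (not_lt.mp hω) zero_le
        have hz : pDx μ D X (X ω) = 0 := hpDx_zero _ h0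
        rw [hf]
        simp only [hz]
        have : (0:ℝ) ≤ (1 / pD ^ 2 * (1 / pT - 1)) * (m (X ω) - θ) ^ 2 := by positivity
        simpa using this
    have hfint : Integrable f μ := by
      refine Integrable.mono (hm2.const_mul (1 / pD ^ 2 * (1 / pT - 1)))
        hfm.aestronglyMeasurable ?_
      filter_upwards with ω
      rw [Real.norm_eq_abs, Real.norm_eq_abs, abs_of_nonneg (hfnonneg ω)]
      refine le_trans (hfle ω) (le_abs_self _)
    -- lower bound: f ≥ c * (m(X)-θ)^2 a.e., with c > 0
    set c : ℝ := ε / pD ^ 2 * (1 / pT - 1) with hc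
    have hcpos : 0 < c := by
      rw [hc]; positivity
    have hlb : (fun ω => c * (m (X ω) - θ) ^ 2) ≤ᵐ[μ] f := by
      filter_upwards [hae] with ω hω
      rw [hkey ω hω]
      have hεle : ε ≤ pDx μ D X (X ω) := by
        refine Finset.inf'_le _ ?_
        simp only [hS, Finset.mem_filter, hXfin.mem_toFinset]
        exact ⟨Set.mem_range_self _, hω⟩
      have h2 : 0 ≤ (m (X ω) - θ) ^ 2 := sq_nonneg _
      have h3 : ε / pD ^ 2 ≤ pDx μ D X (X ω) / pD ^ 2 := by
        gcongr
      calc c * (m (X ω) - θ) ^ 2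
          = ε / pD ^ 2 * ((m (X ω) - θ) ^ 2 * (1 / pT - 1)) := by rw [hc]; ring
        _ ≤ pDx μ D X (X ω) / pD ^ 2 * ((m (X ω) - θ) ^ 2 * (1 / pT - 1)) :=
            mul_le_mul_of_nonneg_right h3 (by positivity)
        _ = pDx μ D X (X ω) / pD ^ 2 * (m (X ω) - θ) ^ 2 * (1 / pT - 1) := by ring
    calc (0:ℝ) < c * ∫ ω, (m (X ω) - θ) ^ 2 ∂μ := by positivity
      _ = ∫ ω, c * (m (X ω) - θ) ^ 2 ∂μ := (integral_const_mul c _).symm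
      _ ≤ ∫ ω, f ω ∂μ := integral_mono_ae (hm2.const_mul c) hfint hlb
      _ = _ := rfl
end
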